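/- Let P and P′ be two transition kernels on the same S × A with the same reward function R satisfying 0 ≤ R(s,a) ≤ 1, let π be a policy, and let ε ≥ 0 satisfy Σ_{s′} |P^π(s′|s) − P′^π(s′|s)| ≤ ε for every state s. Then the value functions of π in the two environments satisfy max_{s∈S} |V_P^π(s) − V_{P′}^π(s)| ≤ γε/(1−γ)². -/
import Mathlib


open Finset

/-- Let `P` and `P'` be two transition kernels on the same `S × A` with the
same reward `R`, `0 ≤ R(s,a) ≤ 1`, let `π` be a policy, and let `ε ≥ 0` satisfy
`∑_{s'} |P^π(s'|s) − P'^π(s'|s)| ≤ ε` for every state `s`. Then the value functions of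
`π` in the two environments satisfy `max_s |V_P^π(s) − V_{P'}^π(s)| ≤ γε/(1−γ)²`
(stated as the bound holding at every state). Value functions are characterized as the
(unique, since `γ < 1`) solutions of the Bellman equations. -/
theorem stmt_3 {S A : Type*} [Fintype S] [Fintype A] [Nonempty S] [Nonempty A]
    (γ : ℝ) (hγ0 : 0 ≤ γ) (hγ1 : γ < 1)
    (R : S → A → ℝ) (hR0 : ∀ s a, 0 ≤ R s a) (hR1 : ∀ s a, R s a ≤ 1)
    (P P' : S → A → S → ℝ)
    (hPpos : ∀ s a s', 0 ≤ P s a s') (hPsum : ∀ s a, ∑ s', P s a s' = 1)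
    (hP'pos : ∀ s a s', 0 ≤ P' s a s') (hP'sum : ∀ s a, ∑ s', P' s a s' = 1)
    (π : S → A → ℝ) (hπpos : ∀ s a, 0 ≤ π s a) (hπsum : ∀ s, ∑ a, π s a = 1)
    (ε : ℝ) (hε0 : 0 ≤ ε)
    (hε : ∀ s, ∑ s', |(∑ a, π s a * P s a s') - (∑ a, π s a * P' s a s')| ≤ ε)
    (V : S → ℝ)
    (hV : ∀ s, V s = (∑ a, π s a * R s a)
        + γ * ∑ s', (∑ a, π s a * P s a s') * V s')
    (V' : S → ℝ)
    (hV' : ∀ s, V' s = (∑ a, π s a * R s a)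
        + γ * ∑ s', (∑ a, π s a * P' s a s') * V' s') :
    ∀ s, |V s - V' s| ≤ γ * ε / (1 - γ) ^ 2 := by
  have h1γ : (0:ℝ) < 1 - γ := by linarith
  set Q : S → S → ℝ := fun s s' => ∑ a, π s a * P s a s' with hQdef
  set Q' : S → S → ℝ := fun s s' => ∑ a, π s a * P' s a s' with hQ'def
  have hQpos : ∀ s s', 0 ≤ Q s s' := fun s s' =>
    Finset.sum_nonneg fun a _ => mul_nonneg (hπpos s a) (hPpos s a s')
  have hQ'pos : ∀ s s', 0 ≤ Q' s s' := fun s s' =>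
    Finset.sum_nonneg fun a _ => mul_nonneg (hπpos s a) (hP'pos s a s')
  have hQsum : ∀ s, ∑ s', Q s s' = 1 := by
    intro s
    calc ∑ s', ∑ a, π s a * P s a s' = ∑ a, ∑ s', π s a * P s a s' := Finset.sum_comm
      _ = ∑ a, π s a * ∑ s', P s a s' := by simp [Finset.mul_sum]
      _ = 1 := by simp [hPsum, hπsum]
  have hQ'sum : ∀ s, ∑ s', Q' s s' = 1 := by
    intro s
    calc ∑ s', ∑ a, π s a * P' s a s' = ∑ a, ∑ s', π s a * P' s a s' := Finset.sum_comm
      _ = ∑ a, π s a * ∑ s', P' s a s' := by simp [Finset.mul_sum]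
      _ = 1 := by simp [hP'sum, hπsum]
  have hRπ0 : ∀ s, 0 ≤ ∑ a, π s a * R s a := fun s =>
    Finset.sum_nonneg fun a _ => mul_nonneg (hπpos s a) (hR0 s a)
  have hRπ1 : ∀ s, ∑ a, π s a * R s a ≤ 1 := by
    intro s
    calc ∑ a, π s a * R s a ≤ ∑ a, π s a * 1 :=
          Finset.sum_le_sum fun a _ => mul_le_mul_of_nonneg_left (hR1 s a) (hπpos s a)
      _ = 1 := by simp [hπsum]
  -- bound on V'
  obtain ⟨s0, -, hs0⟩ := Finset.exists_max_image Finset.univ (fun s => |V' s|) Finset.univ_nonempty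
  have hs0' : ∀ s, |V' s| ≤ |V' s0| := fun s => hs0 s (Finset.mem_univ s)
  have hV'bound : ∀ s, |V' s| ≤ 1 / (1 - γ) := by
    have hb : |∑ s', Q' s0 s' * V' s'| ≤ |V' s0| := by
      calc |∑ s', Q' s0 s' * V' s'| ≤ ∑ s', |Q' s0 s' * V' s'| :=
            Finset.abs_sum_le_sum_abs _ _
        _ ≤ ∑ s', Q' s0 s' * |V' s0| := by
            refine Finset.sum_le_sum fun s' _ => ?_
            rw [abs_mul, abs_of_nonneg (hQ'pos s0 s')]
            exact mul_le_mul_of_nonneg_left (hs0' s') (hQ'pos s0 s')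
        _ = |V' s0| := by rw [← Finset.sum_mul, hQ'sum, one_mul]
    have key : |V' s0| ≤ 1 + γ * |V' s0| := by
      calc |V' s0| = |(∑ a, π s0 a * R s0 a) + γ * ∑ s', Q' s0 s' * V' s'| := by
            rw [← hV' s0]
        _ ≤ |∑ a, π s0 a * R s0 a| + |γ * ∑ s', Q' s0 s' * V' s'| := abs_add_le _ _
        _ ≤ 1 + γ * |V' s0| := by
            rw [abs_mul, abs_of_nonneg hγ0, abs_of_nonneg (hRπ0 s0)]
            have := mul_le_mul_of_nonneg_left hb hγ0
            linarith [hRπ1 s0]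
    have h0 : |V' s0| ≤ 1 / (1 - γ) := by
      rw [le_div_iff₀ h1γ]; nlinarith
    exact fun s => le_trans (hs0' s) h0
  -- main argument
  obtain ⟨s1, -, hs1⟩ := Finset.exists_max_image Finset.univ (fun s => |V s - V' s|)
    Finset.univ_nonempty
  have hs1' : ∀ s, |V s - V' s| ≤ |V s1 - V' s1| := fun s => hs1 s (Finset.mem_univ s)
  set M : ℝ := |V s1 - V' s1| with hMdef
  have hdiff : V s1 - V' s1 =
      γ * ((∑ s', Q s1 s' * (V s' - V' s')) + ∑ s', (Q s1 s' - Q' s1 s') * V' s') := by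
    have e1 := hV s1
    have e2 := hV' s1
    have split : (∑ s', Q s1 s' * (V s' - V' s')) + ∑ s', (Q s1 s' - Q' s1 s') * V' s'
        = (∑ s', Q s1 s' * V s') - ∑ s', Q' s1 s' * V' s' := by
      rw [← Finset.sum_add_distrib, ← Finset.sum_sub_distrib]
      exact Finset.sum_congr rfl fun s' _ => by ring
    rw [split]; linarith
  have hterm1 : |∑ s', Q s1 s' * (V s' - V' s')| ≤ M := by
    calc |∑ s', Q s1 s' * (V s' - V' s')| ≤ ∑ s', |Q s1 s' * (V s' - V' s')| :=
          Finset.abs_sum_le_sum_abs _ _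
      _ ≤ ∑ s', Q s1 s' * M := by
          refine Finset.sum_le_sum fun s' _ => ?_
          rw [abs_mul, abs_of_nonneg (hQpos s1 s')]
          exact mul_le_mul_of_nonneg_left (hs1' s') (hQpos s1 s')
      _ = M := by rw [← Finset.sum_mul, hQsum, one_mul]
  have hterm2 : |∑ s', (Q s1 s' - Q' s1 s') * V' s'| ≤ ε * (1 / (1 - γ)) := by
    calc |∑ s', (Q s1 s' - Q' s1 s') * V' s'| ≤ ∑ s', |(Q s1 s' - Q' s1 s') * V' s'| :=
          Finset.abs_sum_le_sum_abs _ _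
      _ ≤ ∑ s', |Q s1 s' - Q' s1 s'| * (1 / (1 - γ)) := by
          refine Finset.sum_le_sum fun s' _ => ?_
          rw [abs_mul]
          exact mul_le_mul_of_nonneg_left (hV'bound s') (abs_nonneg _)
      _ = (∑ s', |Q s1 s' - Q' s1 s'|) * (1 / (1 - γ)) := by rw [Finset.sum_mul]
      _ ≤ ε * (1 / (1 - γ)) := by
          refine mul_le_mul_of_nonneg_right (hε s1) ?_
          positivity
  have hMrec : M ≤ γ * M + γ * (ε * (1 / (1 - γ))) := by
    calc M = |V s1 - V' s1| := rfl
      _ = γ * |(∑ s', Q s1 s' * (V s' - V' s')) + ∑ s', (Q s1 s' - Q' s1 s') * V' s'| := by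
          rw [hdiff, abs_mul, abs_of_nonneg hγ0]
      _ ≤ γ * (M + ε * (1 / (1 - γ))) := by
          refine mul_le_mul_of_nonneg_left ?_ hγ0
          exact le_trans (abs_add_le _ _) (add_le_add hterm1 hterm2)
      _ = γ * M + γ * (ε * (1 / (1 - γ))) := by ring
  have hMfinal : M ≤ γ * ε / (1 - γ) ^ 2 := by
    rw [pow_two, ← div_div, le_div_iff₀ h1γ]
    have : M * (1 - γ) ≤ γ * (ε * (1 / (1 - γ))) := by nlinarith
    calc M * (1 - γ) ≤ γ * (ε * (1 / (1 - γ))) := this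
      _ = γ * ε / (1 - γ) := by ring
  exact fun s => le_trans (hs1' s) hMfinal
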